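/- arXiv:1110.2963 — 2 statements merged into one kernel-verified Lean document; each statement's English description precedes it below -/
import Mathlib

section
/- Let k be a field, let n ≥ 1, and let α ≠ β be elements of k. Set a₁ = −(α + β) and a₀ = αβ, and define the sequence σ (indexed by the integers) by σ_k = 0 for k < 1, σ₁ = 1, and σ_k = −a₁ σ_{k−1} − a₀ σ_{k−2} for k > 1. Let H : k^{n+1} → k be the linear form with coefficients H_0, …, H_n, set h(x) = Σ_{j=0}^{n} H_j x^j, and define γ_i = Σ_{j=0}^{n} H_j (a₀^j σ_{i−j} − a₀^i σ_{j−i}) for 0 ≤ i ≤ n. Then (β − α)·γ_i = h(α)·β^i − h(β)·α^i for all 0 ≤ i ≤ n. Consequently: (a) if h(α) = h(β) = 0, then the subspace of k^{n+1} spanned by v_α and v_β is contained in the kernel of H; (b) if h(α) and h(β) are not both zero, then the intersection of the subspace spanned by v_α and v_β with the kernel of H is the one-dimensional subspace spanned by (γ_0, γ_1, …, γ_n). -/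
/-- explicit rational formula for the intersection of the secant
`⟨v_α, v_β⟩` with the kernel of a linear form, via the sequence `σ`. -/
theorem stmt_5 {k : Type*} [Field k] {n : ℕ} (hn : 1 ≤ n)
    (α β : k) (hαβ : α ≠ β)
    (a₁ a₀ : k) (ha₁ : a₁ = -(α + β)) (ha₀ : a₀ = α * β)
    (σ : ℤ → k) (hσ0 : ∀ m : ℤ, m < 1 → σ m = 0) (hσ1 : σ 1 = 1)
    (hσ : ∀ m : ℤ, 1 < m → σ m = -a₁ * σ (m - 1) - a₀ * σ (m - 2))
    (H : Fin (n + 1) → k) (Hmap : (Fin (n + 1) → k) →ₗ[k] k)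
    (hHmap : ∀ v, Hmap v = ∑ i, H i * v i)
    (γ : Fin (n + 1) → k)
    (hγ : ∀ i, γ i = ∑ j, H j *
        (a₀ ^ (j : ℕ) * σ (((i : ℕ) : ℤ) - ((j : ℕ) : ℤ))
          - a₀ ^ (i : ℕ) * σ (((j : ℕ) : ℤ) - ((i : ℕ) : ℤ)))) :
    let vα : Fin (n + 1) → k := fun i => α ^ (i : ℕ)
    let vβ : Fin (n + 1) → k := fun i => β ^ (i : ℕ)
    let hval : k → k := fun t => ∑ j, H j * t ^ (j : ℕ)
    (∀ i : Fin (n + 1), (β - α) * γ i = hval α * β ^ (i : ℕ) - hval β * α ^ (i : ℕ)) ∧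
    ((hval α = 0 ∧ hval β = 0) →
        Submodule.span k {vα, vβ} ≤ LinearMap.ker Hmap) ∧
    (¬ (hval α = 0 ∧ hval β = 0) →
        γ ≠ 0 ∧
        Submodule.span k {vα, vβ} ⊓ LinearMap.ker Hmap = Submodule.span k {γ}) := by
  intro vα vβ hval
  have hβα : β - α ≠ 0 := sub_ne_zero.mpr (Ne.symm hαβ)
  have vα_def : ∀ i : Fin (n+1), vα i = α ^ (i : ℕ) := fun _ => rfl
  have vβ_def : ∀ i : Fin (n+1), vβ i = β ^ (i : ℕ) := fun _ => rfl
  have hval_def : ∀ t, hval t = ∑ j, H j * t ^ (j : ℕ) := fun _ => rfl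
  have hσnat : ∀ m : ℕ, (β - α) * σ (m : ℤ) = β ^ m - α ^ m := by
    intro m
    induction m using Nat.strong_induction_on with
    | _ m ih =>
      match m with
      | 0 => simp [hσ0 0 (by norm_num)]
      | 1 => simp [hσ1]
      | Nat.succ (Nat.succ m) =>
        show (β - α) * σ (((m+1+1 : ℕ)) : ℤ) = β ^ (m+1+1) - α ^ (m+1+1)
        have h1 := ih (m+1) (by omega)
        have h2 := ih m (by omega)
        have hrec := hσ ((m : ℤ)+2) (by omega)
        have e3 : (((m+1+1 : ℕ)) : ℤ) = (m : ℤ)+2 := by push_cast; ring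
        have e1 : ((m : ℤ)+2) - 1 = ((m+1 : ℕ) : ℤ) := by push_cast; ring
        have e2 : ((m : ℤ)+2) - 2 = (m : ℤ) := by ring
        rw [e3, hrec, e1, e2, ha₁, ha₀]
        linear_combination (α+β) * h1 - α*β*h2
  have base : ∀ i j : ℕ, j ≤ i →
      (β - α) * (a₀ ^ j * σ ((i : ℤ) - (j : ℤ))) = α ^ j * β ^ i - α ^ i * β ^ j := by
    intro i j h
    obtain ⟨d, rfl⟩ : ∃ d, i = j + d := ⟨i - j, by omega⟩
    have e : ((j + d : ℕ) : ℤ) - (j : ℤ) = (d : ℤ) := by push_cast; ring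
    rw [e, ha₀]
    linear_combination (α*β)^j * hσnat d
  have key : ∀ i j : ℕ,
      (β - α) * (a₀ ^ j * σ ((i : ℤ) - (j : ℤ)) - a₀ ^ i * σ ((j : ℤ) - (i : ℤ)))
      = α ^ j * β ^ i - α ^ i * β ^ j := by
    intro i j
    rcases le_or_gt j i with h | h
    · have hz : σ ((j : ℤ) - (i : ℤ)) = 0 := hσ0 _ (by omega)
      rw [hz, mul_zero, sub_zero]
      exact base i j h
    · have hz : σ ((i : ℤ) - (j : ℤ)) = 0 := hσ0 _ (by omega)
      rw [hz, mul_zero, zero_sub]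
      linear_combination -(base j i h.le)
  have main : ∀ i : Fin (n+1), (β - α) * γ i = hval α * β ^ (i : ℕ) - hval β * α ^ (i : ℕ) := by
    intro i
    rw [hγ i, Finset.mul_sum, hval_def, hval_def, Finset.sum_mul, Finset.sum_mul,
      ← Finset.sum_sub_distrib]
    refine Finset.sum_congr rfl fun j _ => ?_
    linear_combination H j * key (i : ℕ) (j : ℕ)
  have hHα : Hmap vα = hval α := by
    rw [hHmap, hval_def]
  have hHβ : Hmap vβ = hval β := by
    rw [hHmap, hval_def]
  refine ⟨main, ?_, ?_⟩
  · rintro ⟨h1, h2⟩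
    rw [Submodule.span_le]
    rintro x (rfl | rfl)
    · simp [LinearMap.mem_ker, hHα, h1]
    · simp [LinearMap.mem_ker, hHβ, h2]
  · intro hne
    have hγ0 : γ ≠ 0 := by
      intro h0
      have m0 := main ⟨0, by omega⟩
      have m1 := main ⟨1, by omega⟩
      rw [h0] at m0 m1
      simp only [Pi.zero_apply, mul_zero, pow_zero, pow_one, mul_one] at m0 m1
      have hA : hval α = 0 := by
        have hmul : hval α * (β - α) = 0 := by linear_combination α * m0 - m1
        exact (mul_eq_zero.mp hmul).resolve_right hβα
      have hB : hval β = 0 := by linear_combination hA + m0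
      exact hne ⟨hA, hB⟩
    have hγpair : γ ∈ Submodule.span k {vα, vβ} := by
      rw [Submodule.mem_span_pair]
      refine ⟨-(hval β)/(β-α), hval α/(β-α), funext fun i => ?_⟩
      simp only [Pi.add_apply, Pi.smul_apply, smul_eq_mul, vα_def, vβ_def]
      rw [div_mul_eq_mul_div, div_mul_eq_mul_div, ← add_div, div_eq_iff hβα]
      linear_combination -(main i)
    have hkerγ : Hmap γ = 0 := by
      have h1 : (β - α) * Hmap γ = 0 := by
        have : (β - α) * Hmap γ = hval α * Hmap vβ - hval β * Hmap vα := by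
          rw [hHmap, hHmap, hHmap, Finset.mul_sum, Finset.mul_sum, Finset.mul_sum,
            ← Finset.sum_sub_distrib]
          refine Finset.sum_congr rfl fun i _ => ?_
          rw [vα_def, vβ_def]
          linear_combination H i * main i
        rw [this, hHα, hHβ]; ring
      exact (mul_eq_zero.mp h1).resolve_left hβα
    refine ⟨hγ0, le_antisymm ?_ ?_⟩
    · rintro x hx
      rw [Submodule.mem_inf] at hx
      obtain ⟨hx1, hx2⟩ := hx
      rw [Submodule.mem_span_pair] at hx1
      obtain ⟨s, t, rfl⟩ := hx1
      rw [LinearMap.mem_ker, map_add, map_smul, map_smul, hHα, hHβ, smul_eq_mul,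
        smul_eq_mul] at hx2
      rw [Submodule.mem_span_singleton]
      rcases not_and_or.mp hne with hA | hB
      · refine ⟨t*(β-α)/(hval α), funext fun i => ?_⟩
        simp only [Pi.add_apply, Pi.smul_apply, smul_eq_mul, vα_def, vβ_def]
        rw [div_mul_eq_mul_div, div_eq_iff hA]
        linear_combination t * main i - α ^ (i : ℕ) * hx2
      · refine ⟨-s*(β-α)/(hval β), funext fun i => ?_⟩
        simp only [Pi.add_apply, Pi.smul_apply, smul_eq_mul, vα_def, vβ_def]
        rw [div_mul_eq_mul_div, div_eq_iff hB]
        linear_combination -s * main i - β ^ (i : ℕ) * hx2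
    · rw [Submodule.span_le, Set.singleton_subset_iff]
      exact Submodule.mem_inf.mpr ⟨hγpair, hkerγ⟩
end

section
/- Let k be a field and let ℓ ≥ 3 be an integer. Let (x_1, z_1), …, (x_6, z_6) be nonzero vectors in k² that are pairwise non-proportional (x_j z_m ≠ x_m z_j for j ≠ m), and define F_0, …, F_6 ∈ k by the expansion ∏_{j=1}^{6} (z_j X − x_j Z) = Σ_{i=0}^{6} F_i X^i Z^{6−i}. For 1 ≤ j ≤ 6 let w_j = (x_j^i z_j^{2ℓ−i})_{i=0}^{2ℓ} ∈ k^{2ℓ+1}, and for 0 ≤ i ≤ 2ℓ−6 let W_i : k^{2ℓ+1} → k be the linear form W_i(U) = Σ_{j=0}^{6} F_j U_{i+j}. Then the subspace of k^{2ℓ+1} spanned by w_1, …, w_6 equals the intersection of the kernels of W_0, …, W_{2ℓ−6}, and this subspace has dimension 6. -/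
open Finset

/-- Auxiliary: expansion of a product of linear forms in two variables. -/
lemma aux_prod {k : Type*} [Field k] (x z : Fin 6 → k) (s : Finset (Fin 6)) :
    ∃ G : ℕ → k, (∀ i, s.card < i → G i = 0) ∧
      ∀ a b : k, ∏ j ∈ s, (z j * a - x j * b)
        = ∑ i ∈ Finset.range (s.card + 1), G i * a ^ i * b ^ (s.card - i) := by
  classical
  induction s using Finset.induction_on with
  | empty =>
      exact ⟨fun i => if i = 0 then 1 else 0,
        fun i hi => by simp only [if_neg (by omega : ¬ i = 0)],
        fun a b => by simp⟩
  | insert j0 s hj0 ih =>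
      obtain ⟨G, hG0, hG⟩ := ih
      refine ⟨fun i => (if i = 0 then 0 else z j0 * G (i-1)) - x j0 * G i, ?_, ?_⟩
      · intro i hi
        rw [Finset.card_insert_of_notMem hj0] at hi
        simp only [if_neg (by omega : ¬ i = 0), hG0 (i-1) (by omega), hG0 i (by omega)]
        ring
      · intro a b
        rw [Finset.prod_insert hj0, hG a b, Finset.card_insert_of_notMem hj0]
        have e1 : ∀ i ∈ Finset.range (s.card + 1 + 1),
            ((if i = 0 then 0 else z j0 * G (i-1)) - x j0 * G i) * a ^ i * b ^ (s.card + 1 - i)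
            = (if i = 0 then 0 else z j0 * G (i-1)) * a ^ i * b ^ (s.card + 1 - i)
              - x j0 * G i * a ^ i * b ^ (s.card + 1 - i) := fun i _ => by ring
        rw [Finset.sum_congr rfl e1, Finset.sum_sub_distrib]
        rw [Finset.sum_range_succ' (fun i => (if i = 0 then 0 else z j0 * G (i-1)) * a ^ i * b ^ (s.card + 1 - i)) (s.card + 1)]
        rw [Finset.sum_range_succ (fun i => x j0 * G i * a ^ i * b ^ (s.card + 1 - i)) (s.card + 1)]
        rw [hG0 (s.card + 1) (by omega)]
        simp only [Nat.succ_sub_succ, Nat.add_sub_cancel, Nat.sub_zero, eq_self_iff_true, if_true,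
          if_neg (Nat.succ_ne_zero _), zero_mul, mul_zero, add_zero]
        rw [sub_mul, Finset.mul_sum, Finset.mul_sum]
        congr 1
        · exact Finset.sum_congr rfl fun i _ => by ring
        · refine Finset.sum_congr rfl fun i hi => ?_
          rw [Finset.mem_range] at hi
          have hb : b ^ (s.card + 1 - i) = b * b ^ (s.card - i) := by
            rw [← pow_succ']; congr 1; omega
          rw [hb]; ring

/-- Auxiliary: the linear map given by the forms `W_i`. -/
def Tmap {k : Type*} [Field k] (ℓ : ℕ) (F : Fin 7 → k) :
    (Fin (2 * ℓ + 1) → k) →ₗ[k] (Fin (2 * ℓ - 5) → k) where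
  toFun U i := ∑ j : Fin 7, F j * U ⟨(i : ℕ) + (j : ℕ), by
    have hi := i.isLt; have hj := j.isLt; omega⟩
  map_add' U V := by
    funext i
    simp [mul_add, Finset.sum_add_distrib]
  map_smul' c U := by
    funext i
    simp only [Pi.smul_apply, smul_eq_mul, RingHom.id_apply]
    rw [Finset.mul_sum]
    exact Finset.sum_congr rfl fun j _ => by ring

/-- the span of the images of the six Weierstrass points on the
rational normal curve is the common kernel of the linear forms `W_i`, and has
dimension 6. -/
theorem stmt_8 {k : Type*} [Field k] (ℓ : ℕ) (hℓ : 3 ≤ ℓ)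
    (x z : Fin 6 → k) (hnz : ∀ j, (x j, z j) ≠ (0, 0))
    (hpair : ∀ j m, j ≠ m → x j * z m ≠ x m * z j)
    (F : Fin 7 → k)
    (hF : (∏ j, (MvPolynomial.C (z j) * MvPolynomial.X 0
            - MvPolynomial.C (x j) * MvPolynomial.X 1) : MvPolynomial (Fin 2) k)
        = ∑ i : Fin 7, MvPolynomial.C (F i) * MvPolynomial.X 0 ^ (i : ℕ)
            * MvPolynomial.X 1 ^ (6 - (i : ℕ)))
    (w : Fin 6 → Fin (2 * ℓ + 1) → k)
    (hw : ∀ j i, w j i = x j ^ (i : ℕ) * z j ^ (2 * ℓ - (i : ℕ))) :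
    (Submodule.span k (Set.range w) : Set (Fin (2 * ℓ + 1) → k))
      = {U | ∀ i : Fin (2 * ℓ - 5),
          ∑ j : Fin 7, F j * U ⟨(i : ℕ) + (j : ℕ), by
            have hi := i.isLt; have hj := j.isLt; omega⟩ = 0} ∧
    Module.finrank k ↥(Submodule.span k (Set.range w)) = 6 := by
  classical
  -- pointwise version of hF
  have hFab : ∀ a b : k, (∏ j, (z j * a - x j * b))
      = ∑ i : Fin 7, F i * a ^ (i : ℕ) * b ^ (6 - (i : ℕ)) := by
    intro a b
    have h := congrArg (MvPolynomial.eval (fun t : Fin 2 => if t = 0 then a else b)) hF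
    simpa using h
  -- some coefficient is nonzero
  have hFne : ∃ i : Fin 7, F i ≠ 0 := by
    by_contra h
    push_neg at h
    have h0 : (∏ j, (MvPolynomial.C (z j) * MvPolynomial.X 0
        - MvPolynomial.C (x j) * MvPolynomial.X 1) : MvPolynomial (Fin 2) k) = 0 := by
      rw [hF]; simp [h]
    rw [Finset.prod_eq_zero_iff] at h0
    obtain ⟨j, -, hj⟩ := h0
    have hz : z j = 0 := by
      have h1 := congrArg (MvPolynomial.eval (fun t : Fin 2 => if t = 0 then (1:k) else 0)) hj
      simpa using h1
    have hx : x j = 0 := by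
      have h1 := congrArg (MvPolynomial.eval (fun t : Fin 2 => if t = 0 then (0:k) else 1)) hj
      simpa using h1
    exact hnz j (by rw [hx, hz])
  -- top nonzero coefficient
  obtain ⟨i0, hi0⟩ := hFne
  have hSne : (Finset.univ.filter (fun i : Fin 7 => F i ≠ 0)).Nonempty :=
    ⟨i0, by simp [hi0]⟩
  set m0 : Fin 7 := (Finset.univ.filter (fun i : Fin 7 => F i ≠ 0)).max' hSne with hm0def
  have hFm0 : F m0 ≠ 0 := by
    have h := Finset.max'_mem _ hSne
    rw [Finset.mem_filter] at h
    exact h.2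
  have htop : ∀ i : Fin 7, (m0 : ℕ) < (i : ℕ) → F i = 0 := by
    intro i hi
    by_contra hne
    have h1 : i ∈ Finset.univ.filter (fun i : Fin 7 => F i ≠ 0) := by simp [hne]
    have h2 := Finset.le_max' _ i h1
    rw [Fin.le_def] at h2
    omega
  -- each w j lies in the kernel
  have hwk : ∀ j, w j ∈ LinearMap.ker (Tmap ℓ F) := by
    intro j
    rw [LinearMap.mem_ker]
    funext i
    have step1 : Tmap ℓ F (w j) i
        = x j ^ (i : ℕ) * z j ^ (2 * ℓ - 6 - (i : ℕ))
          * ∑ m : Fin 7, F m * x j ^ (m : ℕ) * z j ^ (6 - (m : ℕ)) := by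
      show (∑ m : Fin 7, F m * w j ⟨(i : ℕ) + (m : ℕ), by
          have := i.isLt; have := m.isLt; omega⟩) = _
      rw [Finset.mul_sum]
      refine Finset.sum_congr rfl fun m _ => ?_
      rw [hw]
      have hxx : x j ^ ((i : ℕ) + (m : ℕ)) = x j ^ (i : ℕ) * x j ^ (m : ℕ) := pow_add _ _ _
      have hzz : z j ^ (2 * ℓ - ((i : ℕ) + (m : ℕ)))
          = z j ^ (2 * ℓ - 6 - (i : ℕ)) * z j ^ (6 - (m : ℕ)) := by
        rw [← pow_add]
        congr 1
        have := i.isLt; have := m.isLt; omega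
      show F m * (x j ^ ((i : ℕ) + (m : ℕ)) * z j ^ (2 * ℓ - ((i : ℕ) + (m : ℕ)))) = _
      rw [hxx, hzz]; ring
    rw [step1, ← hFab (x j) (z j), Finset.prod_eq_zero (Finset.mem_univ j) (by ring)]
    simp
  have hle : Submodule.span k (Set.range w) ≤ LinearMap.ker (Tmap ℓ F) :=
    Submodule.span_le.mpr (by rintro _ ⟨j, rfl⟩; exact hwk j)
  -- the banded matrix
  set A : Matrix (Fin (2 * ℓ - 5)) (Fin (2 * ℓ - 5)) k := fun i i' =>
    if h : (i : ℕ) ≤ (i' : ℕ) + (m0 : ℕ) ∧ (i' : ℕ) + (m0 : ℕ) ≤ (i : ℕ) + 6 then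
      F ⟨(i' : ℕ) + (m0 : ℕ) - (i : ℕ), by omega⟩ else 0 with hA
  have hAdiag : ∀ i, A i i = F m0 := by
    intro i
    simp only [hA]
    rw [dif_pos ⟨by omega, by have := m0.isLt; omega⟩]
    congr 1
    exact Fin.ext (by simp)
  have hAlow : ∀ i i' : Fin (2 * ℓ - 5), i < i' → A i i' = 0 := by
    intro i i' hlt
    rw [Fin.lt_def] at hlt
    simp only [hA]
    by_cases h : (i : ℕ) ≤ (i' : ℕ) + (m0 : ℕ) ∧ (i' : ℕ) + (m0 : ℕ) ≤ (i : ℕ) + 6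
    · rw [dif_pos h]
      exact htop _ (by simp; omega)
    · rw [dif_neg h]
  have hdet : A.det ≠ 0 := by
    rw [Matrix.det_of_lowerTriangular A (fun i j hij => hAlow i j hij)]
    rw [Finset.prod_congr rfl (fun i _ => hAdiag i), Finset.prod_const]
    exact pow_ne_zero _ hFm0
  have hAunit : IsUnit A.det := isUnit_iff_ne_zero.mpr hdet
  -- surjectivity of Tmap
  have hsurj : Function.Surjective (Tmap ℓ F) := by
    intro v
    set u : Fin (2 * ℓ - 5) → k := (A⁻¹).mulVec v with hu
    refine ⟨fun c =>
      if h : (m0 : ℕ) ≤ (c : ℕ) ∧ (c : ℕ) - (m0 : ℕ) < 2 * ℓ - 5 then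
        u ⟨(c : ℕ) - (m0 : ℕ), h.2⟩ else 0, ?_⟩
    set U : Fin (2 * ℓ + 1) → k := fun c =>
      if h : (m0 : ℕ) ≤ (c : ℕ) ∧ (c : ℕ) - (m0 : ℕ) < 2 * ℓ - 5 then
        u ⟨(c : ℕ) - (m0 : ℕ), h.2⟩ else 0 with hU
    have key : ∀ i : Fin (2 * ℓ - 5), Tmap ℓ F U i = A.mulVec u i := by
      intro i
      have hl : Tmap ℓ F U i = ∑ j : Fin 7, F j * U ⟨(i : ℕ) + (j : ℕ), by
          have := i.isLt; have := j.isLt; omega⟩ := rfl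
      have hr : A.mulVec u i = ∑ i' : Fin (2 * ℓ - 5), A i i' * u i' := by
        simp [Matrix.mulVec, dotProduct]
      rw [hl, hr]
      rw [← Finset.sum_filter_add_sum_filter_not Finset.univ
        (fun j : Fin 7 => (m0 : ℕ) ≤ (i : ℕ) + (j : ℕ) ∧ (i : ℕ) + (j : ℕ) - (m0 : ℕ) < 2 * ℓ - 5)]
      rw [← Finset.sum_filter_add_sum_filter_not Finset.univ
        (fun i' : Fin (2 * ℓ - 5) => (i : ℕ) ≤ (i' : ℕ) + (m0 : ℕ) ∧ (i' : ℕ) + (m0 : ℕ) ≤ (i : ℕ) + 6)]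
      have hz1 : ∑ j ∈ Finset.univ.filter (fun j : Fin 7 =>
          ¬((m0 : ℕ) ≤ (i : ℕ) + (j : ℕ) ∧ (i : ℕ) + (j : ℕ) - (m0 : ℕ) < 2 * ℓ - 5)),
          F j * U ⟨(i : ℕ) + (j : ℕ), by have := i.isLt; have := j.isLt; omega⟩ = 0 := by
        refine Finset.sum_eq_zero fun j hj => ?_
        rw [Finset.mem_filter] at hj
        have : U ⟨(i : ℕ) + (j : ℕ), by have := i.isLt; have := j.isLt; omega⟩ = 0 := by
          rw [hU]; exact dif_neg hj.2
        rw [this, mul_zero]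
      have hz2 : ∑ i' ∈ Finset.univ.filter (fun i' : Fin (2 * ℓ - 5) =>
          ¬((i : ℕ) ≤ (i' : ℕ) + (m0 : ℕ) ∧ (i' : ℕ) + (m0 : ℕ) ≤ (i : ℕ) + 6)),
          A i i' * u i' = 0 := by
        refine Finset.sum_eq_zero fun i' hi' => ?_
        rw [Finset.mem_filter] at hi'
        have : A i i' = 0 := by simp only [hA]; exact dif_neg hi'.2
        rw [this, zero_mul]
      rw [hz1, hz2, add_zero, add_zero]
      refine Finset.sum_nbij'
        (fun j : Fin 7 => (⟨min ((i : ℕ) + (j : ℕ) - (m0 : ℕ)) (2 * ℓ - 6), by omega⟩ : Fin (2 * ℓ - 5)))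
        (fun i' : Fin (2 * ℓ - 5) => (⟨min ((i' : ℕ) + (m0 : ℕ) - (i : ℕ)) 6, by omega⟩ : Fin 7))
        ?_ ?_ ?_ ?_ ?_
      · intro j hj
        rw [Finset.mem_filter] at hj ⊢
        refine ⟨Finset.mem_univ _, ?_⟩
        obtain ⟨-, h1, h2⟩ := hj
        simp only
        constructor <;> [skip; skip] <;> · (try simp only [Fin.val_mk]); omega
      · intro i' hi'
        rw [Finset.mem_filter] at hi' ⊢
        refine ⟨Finset.mem_univ _, ?_⟩
        obtain ⟨-, h1, h2⟩ := hi'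
        have := i'.isLt
        constructor <;> · (try simp only [Fin.val_mk]); omega
      · intro j hj
        rw [Finset.mem_filter] at hj
        obtain ⟨-, h1, h2⟩ := hj
        have := j.isLt
        exact Fin.ext (by (try simp only [Fin.val_mk]); omega)
      · intro i' hi'
        rw [Finset.mem_filter] at hi'
        obtain ⟨-, h1, h2⟩ := hi'
        have := i'.isLt
        exact Fin.ext (by (try simp only [Fin.val_mk]); omega)
      · intro j hj
        rw [Finset.mem_filter] at hj
        obtain ⟨-, h1, h2⟩ := hj
        have hjlt := j.isLt
        have hUv : U ⟨(i : ℕ) + (j : ℕ), by have := i.isLt; omega⟩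
            = u ⟨(i : ℕ) + (j : ℕ) - (m0 : ℕ), h2⟩ := by
          rw [hU]; exact dif_pos ⟨h1, h2⟩
        have hAv : A i ⟨min ((i : ℕ) + (j : ℕ) - (m0 : ℕ)) (2 * ℓ - 6), by omega⟩ = F j := by
          simp only [hA]
          rw [dif_pos ⟨by (try simp only [Fin.val_mk]); omega, by (try simp only [Fin.val_mk]); omega⟩]
          congr 1
          exact Fin.ext (by (try simp only [Fin.val_mk]); omega)
        have hidx : (⟨(i : ℕ) + (j : ℕ) - (m0 : ℕ), h2⟩ : Fin (2 * ℓ - 5))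
            = ⟨min ((i : ℕ) + (j : ℕ) - (m0 : ℕ)) (2 * ℓ - 6), by omega⟩ := Fin.ext (by simp only [Fin.val_mk]; omega)
        rw [hUv, hAv, hidx, mul_comm]
    funext i
    rw [key i, hu, Matrix.mulVec_mulVec, Matrix.mul_nonsing_inv A hAunit, Matrix.one_mulVec]
  -- dimension of the kernel
  have hker : Module.finrank k ↥(LinearMap.ker (Tmap ℓ F)) = 6 := by
    have h1 := LinearMap.finrank_range_add_finrank_ker (Tmap ℓ F)
    rw [LinearMap.range_eq_top.mpr hsurj, finrank_top, Module.finrank_fin_fun,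
      Module.finrank_fin_fun] at h1
    omega
  -- linear independence of the w j
  have hli : LinearIndependent k w := by
    rw [Fintype.linearIndependent_iff]
    intro c hc m
    have hc' : ∀ coord : Fin (2 * ℓ + 1), ∑ j : Fin 6, c j * w j coord = 0 := by
      intro coord
      have := congrFun hc coord
      simpa using this
    obtain ⟨G, hG0, hG⟩ := aux_prod x z (Finset.univ.erase m)
    have hcard : (Finset.univ.erase m).card = 5 := by
      rw [Finset.card_erase_of_mem (Finset.mem_univ m)]
      simp
    rw [hcard] at hG0 hG
    have hG' : ∀ a b : k, ∏ j ∈ Finset.univ.erase m, (z j * a - x j * b)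
        = ∑ i : Fin 6, G i * a ^ (i : ℕ) * b ^ (5 - (i : ℕ)) := by
      intro a b
      rw [hG a b, ← Fin.sum_univ_eq_sum_range (fun i => G i * a ^ i * b ^ (5 - i)) 6]
    obtain ⟨t, ht, htx⟩ : ∃ t, t ≤ 2 * ℓ - 5 ∧ x m ^ t * z m ^ (2 * ℓ - 5 - t) ≠ 0 := by
      by_cases hzm : z m = 0
      · have hxm : x m ≠ 0 := by
          intro h; exact hnz m (by rw [h, hzm])
        refine ⟨2 * ℓ - 5, le_rfl, ?_⟩
        rw [Nat.sub_self, pow_zero, mul_one]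
        exact pow_ne_zero _ hxm
      · refine ⟨0, Nat.zero_le _, ?_⟩
        rw [pow_zero, one_mul, Nat.sub_zero]
        exact pow_ne_zero _ hzm
    have hmain : ∑ j : Fin 6, c j * (x j ^ t * z j ^ (2 * ℓ - 5 - t)
        * ∏ j' ∈ Finset.univ.erase m, (z j' * x j - x j' * z j)) = 0 := by
      have step1 : ∀ j : Fin 6, c j * (x j ^ t * z j ^ (2 * ℓ - 5 - t)
          * ∏ j' ∈ Finset.univ.erase m, (z j' * x j - x j' * z j))
          = ∑ i : Fin 6, G i * (c j * (x j ^ ((i : ℕ) + t) * z j ^ (2 * ℓ - ((i : ℕ) + t)))) := by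
        intro j
        rw [hG' (x j) (z j), Finset.mul_sum, Finset.mul_sum]
        refine Finset.sum_congr rfl fun i _ => ?_
        have hzz : z j ^ (2 * ℓ - ((i : ℕ) + t))
            = z j ^ (5 - (i : ℕ)) * z j ^ (2 * ℓ - 5 - t) := by
          rw [← pow_add]
          congr 1
          have := i.isLt
          omega
        rw [hzz, pow_add]
        ring
      calc ∑ j : Fin 6, c j * (x j ^ t * z j ^ (2 * ℓ - 5 - t)
            * ∏ j' ∈ Finset.univ.erase m, (z j' * x j - x j' * z j))
          = ∑ j : Fin 6, ∑ i : Fin 6,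
              G i * (c j * (x j ^ ((i : ℕ) + t) * z j ^ (2 * ℓ - ((i : ℕ) + t)))) :=
            Finset.sum_congr rfl fun j _ => step1 j
        _ = ∑ i : Fin 6, G i * ∑ j : Fin 6, c j * w j ⟨(i : ℕ) + t, by
              have := i.isLt; omega⟩ := by
            rw [Finset.sum_comm]
            refine Finset.sum_congr rfl fun i _ => ?_
            rw [Finset.mul_sum]
            refine Finset.sum_congr rfl fun j _ => ?_
            rw [hw]
        _ = 0 := by
            refine Finset.sum_eq_zero fun i _ => ?_
            rw [hc', mul_zero]
    rw [Finset.sum_eq_single m (fun j _ hjm => by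
        rw [Finset.prod_eq_zero (Finset.mem_erase.mpr ⟨hjm, Finset.mem_univ j⟩)
          (by ring : z j * x j - x j * z j = 0)]
        ring)
      (fun hm => absurd (Finset.mem_univ m) hm)] at hmain
    have hP : ∏ j' ∈ Finset.univ.erase m, (z j' * x m - x j' * z m) ≠ 0 := by
      rw [Finset.prod_ne_zero_iff]
      intro j' hj'
      have hj'm : j' ≠ m := (Finset.mem_erase.mp hj').1
      intro heq
      exact hpair m j' (Ne.symm hj'm) (by
        have := sub_eq_zero.mp heq
        rw [mul_comm] at this
        rw [this, mul_comm])
    rcases mul_eq_zero.mp hmain with h | h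
    · exact h
    · exact absurd h (by
        intro h0
        rcases mul_eq_zero.mp h0 with h1 | h1
        · exact htx h1
        · exact hP h1)
  have hspan : Module.finrank k ↥(Submodule.span k (Set.range w)) = 6 := by
    rw [finrank_span_eq_card hli]
    simp
  have heq : Submodule.span k (Set.range w) = LinearMap.ker (Tmap ℓ F) :=
    Submodule.eq_of_le_of_finrank_eq hle (by rw [hspan, hker])
  refine ⟨?_, hspan⟩
  rw [heq]
  ext U
  simp only [SetLike.mem_coe, LinearMap.mem_ker, Set.mem_setOf_eq, funext_iff, Pi.zero_apply]
  exact Iff.rfl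
end
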